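/- Let G be a finite group, K a normal subgroup of G contained in Z_n(G) with exponent p^e. Then for every x ∈ G, x^{p^{e+n}} centralizes K; consequently G^{p^{e+n}} ≤ C_G(K). -/

import Mathlib

namespace Stmt9Aux

open Subgroup

variable {G : Type*} [Group G]

/-- Generators of the weight filtration: `p^r`-th powers of elements of `K ⊓ Z_j`,
where the "weight" `(n - j) + r` is at least `w` (written without subtraction). -/
def sgen (K : Subgroup G) (p n w : ℕ) : Set G :=
  {z | ∃ j r a, j ≤ n ∧ w + j ≤ n + r ∧ a ∈ K ⊓ Subgroup.upperCentralSeries G j ∧ z = a ^ p ^ r}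

def nfil (K : Subgroup G) (p n w : ℕ) : Subgroup G := Subgroup.closure (sgen K p n w)

variable {K : Subgroup G} {p : ℕ}

lemma mem_nfil_of_gen {n w j r : ℕ} {a : G} (hj : j ≤ n) (hw : w + j ≤ n + r)
    (ha : a ∈ K ⊓ Subgroup.upperCentralSeries G j) : a ^ p ^ r ∈ nfil K p n w :=
  subset_closure ⟨j, r, a, hj, hw, ha, rfl⟩

lemma nfil_mono {n w w' : ℕ} (h : w ≤ w') : nfil K p n w' ≤ nfil K p n w :=
  closure_mono (fun z hz => by
    obtain ⟨j, r, a, h1, h2, h3, h4⟩ := hz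
    exact ⟨j, r, a, h1, by omega, h3, h4⟩)

lemma nfil_shift {n w : ℕ} : nfil K p n w ≤ nfil K p (n + 1) (w + 1) :=
  closure_mono (fun z hz => by
    obtain ⟨j, r, a, h1, h2, h3, h4⟩ := hz
    exact ⟨j, r, a, by omega, by omega, h3, h4⟩)

lemma conj_pow'' (g a : G) (m : ℕ) : (g * a * g⁻¹) ^ m = g * a ^ m * g⁻¹ := by
  induction m with
  | zero => group
  | succ m ih => rw [pow_succ, ih, pow_succ]; group

lemma nfil_normal (hK : K.Normal) (n w : ℕ) : (nfil K p n w).Normal := by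
  refine ⟨fun x hx g => ?_⟩
  induction hx using closure_induction with
  | mem z hz =>
      obtain ⟨j, r, a, h1, h2, h3, rfl⟩ := hz
      rw [← conj_pow'']
      have h3' := mem_inf.mp h3
      exact mem_nfil_of_gen h1 h2 (mem_inf.mpr
        ⟨hK.conj_mem a h3'.1 g, (inferInstance : (Subgroup.upperCentralSeries G j).Normal).conj_mem a h3'.2 g⟩)
  | one => simpa using one_mem _
  | mul x y hx hy ihx ihy =>
      have hid : g * (x * y) * g⁻¹ = (g * x * g⁻¹) * (g * y * g⁻¹) := by group
      rw [hid]; exact mul_mem ihx ihy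
  | inv x hx ihx =>
      have hid : g * x⁻¹ * g⁻¹ = (g * x * g⁻¹)⁻¹ := by group
      rw [hid]; exact inv_mem ihx

lemma nfil_eq_bot {e : ℕ} (he : ∀ a ∈ K, a ^ p ^ e = 1) {n w : ℕ} (hw : n + e ≤ w + 1) :
    nfil K p n w = ⊥ := by
  rw [eq_bot_iff]
  apply (closure_le _).mpr
  rintro z ⟨j, r, a, h1, h2, h3, rfl⟩
  have h3' := mem_inf.mp h3
  rcases Nat.eq_zero_or_pos j with hj | hj
  · subst hj
    have : a = 1 := by
      have := h3'.2
      rwa [Subgroup.upperCentralSeries_zero, Subgroup.mem_bot] at this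
    simp [this, Subgroup.mem_bot]
  · have her : e ≤ r := by omega
    obtain ⟨d, rfl⟩ := Nat.exists_eq_add_of_le her
    have : a ^ p ^ (e + d) = 1 := by
      rw [pow_add, pow_mul, he a h3'.1, one_pow]
    simp [this, Subgroup.mem_bot]

theorem pkg (hK : K.Normal) (n : ℕ) :
    (∀ w : ℕ, ∀ x ∈ nfil K p n w, ∀ g : G, g * x * g⁻¹ * x⁻¹ ∈ nfil K p n (w + 1)) ∧
    (∀ w : ℕ, ∀ x ∈ nfil K p n w, x ^ p ∈ nfil K p n (w + 1)) := by
  induction n with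
  | zero =>
      have hbot : ∀ w, nfil K p 0 w = ⊥ := by
        intro w
        rw [eq_bot_iff]
        apply (closure_le _).mpr
        rintro z ⟨j, r, a, h1, h2, h3, rfl⟩
        have hj : j = 0 := by omega
        subst hj
        have : a = 1 := by
          have := (mem_inf.mp h3).2
          rwa [Subgroup.upperCentralSeries_zero, Subgroup.mem_bot] at this
        simp [this, Subgroup.mem_bot]
      constructor
      · intro w x hx g
        rw [hbot w, Subgroup.mem_bot] at hx
        subst hx
        have : g * 1 * g⁻¹ * 1⁻¹ = 1 := by group
        rw [this]; exact one_mem _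
      · intro w x hx
        rw [hbot w, Subgroup.mem_bot] at hx
        subst hx
        rw [one_pow]; exact one_mem _
  | succ n ih =>
      obtain ⟨ih1, ih2⟩ := ih
      -- key commutator claim for top-layer generators
      have key : ∀ r : ℕ, ∀ g a : G, a ∈ K → a ∈ Subgroup.upperCentralSeries G (n + 1) →
          g * a ^ p ^ r * g⁻¹ * (a ^ p ^ r)⁻¹ ∈ nfil K p n r := by
        intro r
        induction r with
        | zero =>
            intro g a haK haZ
            have hmK : g * a * g⁻¹ * a⁻¹ ∈ K := mul_mem (hK.conj_mem a haK g) (inv_mem haK)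
            have hmZ : g * a * g⁻¹ * a⁻¹ ∈ Subgroup.upperCentralSeries G n := by
              have h := (Subgroup.mem_upperCentralSeries_succ_iff).mp haZ g
              have hid : g * a * g⁻¹ * a⁻¹ = (a * g * a⁻¹ * g⁻¹)⁻¹ := by group
              rw [hid]; exact inv_mem h
            have hmem := mem_nfil_of_gen (le_refl n) (by omega : 0 + n ≤ n + 0)
              (mem_inf.mpr ⟨hmK, hmZ⟩) (p := p)
            simpa using hmem
        | succ r ihr =>
            intro g a haK haZ
            set t := a ^ p ^ r with htdef
            have hm : g * t * g⁻¹ * t⁻¹ ∈ nfil K p n r := ihr g a haK haZ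
            set m := g * t * g⁻¹ * t⁻¹ with hmdef
            have sub : ∀ q : ℕ, ∃ ν ∈ nfil K p n (r + 1), (m * t) ^ q = m ^ q * ν * t ^ q := by
              intro q
              induction q with
              | zero => exact ⟨1, one_mem _, by simp⟩
              | succ q ihq =>
                  obtain ⟨ν, hν, hq⟩ := ihq
                  have hκ : t * m ^ q * t⁻¹ * (m ^ q)⁻¹ ∈ nfil K p n (r + 1) :=
                    ih1 r (m ^ q) (pow_mem hm q) t
                  refine ⟨(m ^ q)⁻¹ * (t * m ^ q * t⁻¹ * (m ^ q)⁻¹) * m ^ q * (t * ν * t⁻¹),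
                    ?_, ?_⟩
                  · have c1 : (m ^ q)⁻¹ * (t * m ^ q * t⁻¹ * (m ^ q)⁻¹) * m ^ q ∈
                        nfil K p n (r + 1) := by
                      have := (nfil_normal hK n (r + 1)).conj_mem _ hκ (m ^ q)⁻¹
                      simpa using this
                    have c2 : t * ν * t⁻¹ ∈ nfil K p n (r + 1) :=
                      (nfil_normal hK n (r + 1)).conj_mem _ hν t
                    exact mul_mem c1 c2
                  · calc (m * t) ^ (q + 1) = (m * t) * (m * t) ^ q := by rw [pow_succ']
                      _ = m * (t * m ^ q * t⁻¹ * (m ^ q)⁻¹) * m ^ q * (t * ν * t⁻¹) * t ^ (q + 1) := by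
                          rw [hq, pow_succ']; group
                      _ = m ^ (q + 1) * ((m ^ q)⁻¹ * (t * m ^ q * t⁻¹ * (m ^ q)⁻¹) * m ^ q *
                            (t * ν * t⁻¹)) * t ^ (q + 1) := by
                          rw [pow_succ']; group
            obtain ⟨ν, hν, hq⟩ := sub p
            have hmp : m ^ p ∈ nfil K p n (r + 1) := ih2 r m hm
            have hta : a ^ p ^ (r + 1) = t ^ p := by rw [htdef, ← pow_mul, ← pow_succ]
            have hgt : g * t * g⁻¹ = m * t := by rw [hmdef]; group
            have hconj : g * t ^ p * g⁻¹ = (m * t) ^ p := by rw [← hgt, conj_pow'']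
            rw [hta]
            have hfin : g * t ^ p * g⁻¹ * (t ^ p)⁻¹ = m ^ p * ν := by
              rw [hconj, hq]; group
            rw [hfin]
            exact mul_mem hmp hν
      -- part (i) at n+1
      have I1 : ∀ w : ℕ, ∀ x ∈ nfil K p (n + 1) w, ∀ g : G,
          g * x * g⁻¹ * x⁻¹ ∈ nfil K p (n + 1) (w + 1) := by
        intro w x hx g
        induction hx using closure_induction with
        | mem z hz =>
            obtain ⟨j, r, a, h1, h2, h3, rfl⟩ := hz
            rcases Nat.lt_or_ge j (n + 1) with hj | hj
            · have hg : a ^ p ^ r ∈ nfil K p n (w - 1) :=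
                mem_nfil_of_gen (by omega) (by omega) h3
              have hcomm := ih1 (w - 1) _ hg g
              exact nfil_mono (by omega) (nfil_shift hcomm)
            · have hj' : j = n + 1 := by omega
              subst hj'
              have h3' := mem_inf.mp h3
              have hkey := key r g a h3'.1 h3'.2
              exact nfil_mono (by omega) (nfil_shift hkey)
        | one =>
            have : g * 1 * g⁻¹ * 1⁻¹ = 1 := by group
            rw [this]; exact one_mem _
        | mul x y hx hy ihx ihy =>
            have hid : g * (x * y) * g⁻¹ * (x * y)⁻¹ =
                (g * x * g⁻¹ * x⁻¹) * (x * (g * y * g⁻¹ * y⁻¹) * x⁻¹) := by group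
            rw [hid]
            exact mul_mem ihx ((nfil_normal hK _ _).conj_mem _ ihy x)
        | inv x hx ihx =>
            have hid : g * x⁻¹ * g⁻¹ * (x⁻¹)⁻¹ = x⁻¹ * (g * x * g⁻¹ * x⁻¹)⁻¹ * (x⁻¹)⁻¹ := by
              group
            rw [hid]
            exact (nfil_normal hK _ _).conj_mem _ (inv_mem ihx) x⁻¹
      -- part (ii) at n+1
      have I2 : ∀ w : ℕ, ∀ x ∈ nfil K p (n + 1) w, x ^ p ∈ nfil K p (n + 1) (w + 1) := by
        intro w x hx
        induction hx using closure_induction with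
        | mem z hz =>
            obtain ⟨j, r, a, h1, h2, h3, rfl⟩ := hz
            have hpow : (a ^ p ^ r) ^ p = a ^ p ^ (r + 1) := by rw [← pow_mul, ← pow_succ]
            rw [hpow]
            exact mem_nfil_of_gen h1 (by omega) h3
        | one => rw [one_pow]; exact one_mem _
        | mul x y hx hy ihx ihy =>
            have sub : ∀ q : ℕ, ∃ ν ∈ nfil K p (n + 1) (w + 1),
                (x * y) ^ q = x ^ q * y ^ q * ν := by
              intro q
              induction q with
              | zero => exact ⟨1, one_mem _, by simp⟩
              | succ q ihq =>
                  obtain ⟨ν, hν, hq⟩ := ihq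
                  have hδ : y * x ^ q * y⁻¹ * (x ^ q)⁻¹ ∈ nfil K p (n + 1) (w + 1) :=
                    I1 w (x ^ q) (pow_mem hx q) y
                  refine ⟨(y ^ (q + 1))⁻¹ * ((x ^ q)⁻¹ * (y * x ^ q * y⁻¹ * (x ^ q)⁻¹) * x ^ q) *
                      y ^ (q + 1) * ν, ?_, ?_⟩
                  · have c1 : (x ^ q)⁻¹ * (y * x ^ q * y⁻¹ * (x ^ q)⁻¹) * x ^ q ∈
                        nfil K p (n + 1) (w + 1) := by
                      have := (nfil_normal hK _ _).conj_mem _ hδ (x ^ q)⁻¹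
                      simpa using this
                    have c2 := (nfil_normal hK _ _).conj_mem _ c1 (y ^ (q + 1))⁻¹
                    simp only [inv_inv] at c2
                    exact mul_mem c2 hν
                  · calc (x * y) ^ (q + 1) = (x * y) * (x * y) ^ q := by rw [pow_succ']
                      _ = x * (y * x ^ q * y⁻¹ * (x ^ q)⁻¹) * x ^ q * y ^ (q + 1) * ν := by
                          rw [hq, pow_succ']; group
                      _ = x ^ (q + 1) * y ^ (q + 1) *
                          ((y ^ (q + 1))⁻¹ * ((x ^ q)⁻¹ * (y * x ^ q * y⁻¹ * (x ^ q)⁻¹) * x ^ q) *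
                            y ^ (q + 1) * ν) := by
                          rw [pow_succ']; group
            obtain ⟨ν, hν, hq⟩ := sub p
            rw [hq]
            exact mul_mem (mul_mem ihx ihy) hν
        | inv x hx ihx =>
            rw [inv_pow]; exact inv_mem ihx
      exact ⟨I1, I2⟩

end Stmt9Aux

open Stmt9Aux Subgroup

set_option linter.unusedVariables false

theorem stmt_9 {G : Type*} [Group G] [Finite G] (p : ℕ) (hp : p.Prime) (n e : ℕ)
    (K : Subgroup G) (hKnorm : K.Normal) (hKp : IsPGroup p K)
    (hKle : K ≤ _root_.upperCentralSeries G n) (hexp : Monoid.exponent K = p ^ e) :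
    (∀ x : G, ∀ k ∈ K, Commute (x ^ p ^ (e + n)) k) ∧
      Subgroup.closure {z : G | ∃ x : G, z = x ^ p ^ (e + n)} ≤
        Subgroup.centralizer (K : Set G) := by
  have he : ∀ a ∈ K, a ^ p ^ e = 1 := by
    intro a ha
    have h1 := Monoid.pow_exponent_eq_one (⟨a, ha⟩ : K)
    rw [hexp] at h1
    have := congrArg (fun z : K => (z : G)) h1
    simpa using this
  obtain ⟨I1, I2⟩ := pkg (K := K) (p := p) hKnorm n
  have main : ∀ s : ℕ, ∀ x : G, ∀ k ∈ K,
      x ^ p ^ s * k * (x ^ p ^ s)⁻¹ * k⁻¹ ∈ nfil K p n (s + 1) := by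
    intro s
    induction s with
    | zero =>
        intro x k hk
        have hk0 : k ∈ nfil K p n 0 := by
          have := mem_nfil_of_gen (le_refl n) (by omega : 0 + n ≤ n + 0)
            (mem_inf.mpr ⟨hk, hKle hk⟩) (p := p) (r := 0)
          simpa using this
        simpa using I1 0 k hk0 x
    | succ s ihs =>
        intro x k hk
        set u := x ^ p ^ s with hudef
        have hc : u * k * u⁻¹ * k⁻¹ ∈ nfil K p n (s + 1) := ihs x k hk
        set c := u * k * u⁻¹ * k⁻¹ with hcdef
        have hck : u * k * u⁻¹ = c * k := by rw [hcdef]; group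
        have sub : ∀ q : ℕ, ∃ ν ∈ nfil K p n (s + 1 + 1),
            u ^ q * k * (u ^ q)⁻¹ = c ^ q * ν * k := by
          intro q
          induction q with
          | zero => exact ⟨1, one_mem _, by simp⟩
          | succ q ihq =>
              obtain ⟨ν, hν, hq⟩ := ihq
              have hκ : u * c ^ q * u⁻¹ * (c ^ q)⁻¹ ∈ nfil K p n (s + 1 + 1) :=
                I1 (s + 1) (c ^ q) (pow_mem hc q) u
              refine ⟨(c ^ (q + 1))⁻¹ * (u * c ^ q * u⁻¹ * (c ^ q)⁻¹) * c ^ (q + 1) *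
                  (c⁻¹ * (u * ν * u⁻¹) * c), ?_, ?_⟩
              · have c1 := (nfil_normal hKnorm n (s + 1 + 1)).conj_mem _ hκ (c ^ (q + 1))⁻¹
                simp only [inv_inv] at c1
                have c2 : c⁻¹ * (u * ν * u⁻¹) * c ∈ nfil K p n (s + 1 + 1) := by
                  have := (nfil_normal hKnorm n (s + 1 + 1)).conj_mem _
                    ((nfil_normal hKnorm n (s + 1 + 1)).conj_mem _ hν u) c⁻¹
                  simpa using this
                exact mul_mem c1 c2
              · calc u ^ (q + 1) * k * (u ^ (q + 1))⁻¹
                    = u * (u ^ q * k * (u ^ q)⁻¹) * u⁻¹ := by rw [pow_succ']; group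
                  _ = u * (c ^ q * ν * k) * u⁻¹ := by rw [hq]
                  _ = (u * c ^ q * u⁻¹ * (c ^ q)⁻¹) * c ^ q * (u * ν * u⁻¹) * (u * k * u⁻¹) := by
                      group
                  _ = (u * c ^ q * u⁻¹ * (c ^ q)⁻¹) * c ^ q * (u * ν * u⁻¹) * (c * k) := by
                      rw [hck]
                  _ = c ^ (q + 1) * ((c ^ (q + 1))⁻¹ * (u * c ^ q * u⁻¹ * (c ^ q)⁻¹) * c ^ (q + 1) *
                        (c⁻¹ * (u * ν * u⁻¹) * c)) * k := by
                      group
        obtain ⟨ν, hν, hq⟩ := sub p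
        have hup : x ^ p ^ (s + 1) = u ^ p := by rw [hudef, ← pow_mul, ← pow_succ]
        rw [hup]
        have hfin : u ^ p * k * (u ^ p)⁻¹ * k⁻¹ = c ^ p * ν := by rw [hq]; group
        rw [hfin]
        exact mul_mem (I2 (s + 1) c hc) hν
  have hcomm : ∀ x : G, ∀ k ∈ K, Commute (x ^ p ^ (e + n)) k := by
    intro x k hk
    have h1 := main (e + n) x k hk
    rw [nfil_eq_bot he (by omega)] at h1
    have h2 := Subgroup.mem_bot.mp h1
    have : x ^ p ^ (e + n) * k = k * x ^ p ^ (e + n) := by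
      calc x ^ p ^ (e + n) * k
          = (x ^ p ^ (e + n) * k * (x ^ p ^ (e + n))⁻¹ * k⁻¹) * (k * x ^ p ^ (e + n)) := by group
        _ = k * x ^ p ^ (e + n) := by rw [h2]; group
    exact this
  refine ⟨hcomm, ?_⟩
  apply (Subgroup.closure_le _).mpr
  rintro z ⟨x, rfl⟩
  rw [SetLike.mem_coe, Subgroup.mem_centralizer_iff]
  intro k hk
  exact (hcomm x k hk).symm
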